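/- Let E ⊆ ℝ² be Lebesgue measurable, let x ∈ ℝ² and ε > 0. Then λ²((E ∩ B_ε(x)) \ {x}) ≤ ε² · λ¹({θ ∈ [0,π) : there exists t ∈ (−ε,ε) \ {0} with x + t(cos θ, sin θ) ∈ E}), where the measure of the angular set is understood as Lebesgue outer measure if the set is not measurable. -/

import Mathlib

open MeasureTheory Set Real

private lemma euclid_smul_vec (r a b : ℝ) :
    (WithLp.equiv 2 (Fin 2 → ℝ)).symm ![r * a, r * b]
      = r • (WithLp.equiv 2 (Fin 2 → ℝ)).symm ![a, b] := by
  have h : ![r * a, r * b] = r • ![a, b] := by funext i; fin_cases i <;> simp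
  rw [h]; rfl

private lemma euclid_norm_vec (a b : ℝ) :
    ‖(WithLp.equiv 2 (Fin 2 → ℝ)).symm ![a, b]‖ = Real.sqrt (a ^ 2 + b ^ 2) := by
  rw [EuclideanSpace.norm_eq]
  simp [Fin.sum_univ_two, Real.norm_eq_abs, sq_abs]

/-- Polar-coordinate estimate: the planar measure of `(E ∩ B_ε(x)) \ {x}` is at most
`ε²` times the (outer) measure of the set of angles `θ ∈ [0, π)` whose line through `x`
meets `E` at some parameter `t ∈ (-ε, ε) \ {0}`. -/
theorem measure_inter_ball_le_angular_measure
    (E : Set (EuclideanSpace ℝ (Fin 2))) (hE : MeasurableSet E)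
    (x : EuclideanSpace ℝ (Fin 2)) (ε : ℝ) (hε : 0 < ε) :
    volume ((E ∩ Metric.ball x ε) \ {x}) ≤
      ENNReal.ofReal (ε ^ 2) *
        volume {θ : ℝ | θ ∈ Set.Ico 0 Real.pi ∧
          ∃ t ∈ Set.Ioo (-ε) ε, t ≠ 0 ∧
            x + t • (WithLp.equiv 2 (Fin 2 → ℝ)).symm ![Real.cos θ, Real.sin θ] ∈ E} := by
  classical
  set A : Set ℝ := {θ : ℝ | θ ∈ Set.Ico 0 Real.pi ∧
      ∃ t ∈ Set.Ioo (-ε) ε, t ≠ 0 ∧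
        x + t • (WithLp.equiv 2 (Fin 2 → ℝ)).symm ![Real.cos θ, Real.sin θ] ∈ E} with hA
  set S : Set (EuclideanSpace ℝ (Fin 2)) := (E ∩ Metric.ball x ε) \ {x} with hSdef
  have hS : MeasurableSet S := (hE.inter measurableSet_ball).diff (measurableSet_singleton x)
  set F : ℝ × ℝ → EuclideanSpace ℝ (Fin 2) :=
    fun p => x + (WithLp.equiv 2 (Fin 2 → ℝ)).symm ![p.1, p.2] with hFdef
  have hF : MeasurePreserving F volume volume := by
    have h1 : MeasurePreserving (fun v : EuclideanSpace ℝ (Fin 2) => x + v) volume volume :=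
      measurePreserving_add_left volume x
    have h2 := PiLp.volume_preserving_toLp (Fin 2)
    have h3 := (volume_preserving_finTwoArrow ℝ).symm
    have heq : F = (fun v : EuclideanSpace ℝ (Fin 2) => x + v) ∘
        ((WithLp.equiv 2 (Fin 2 → ℝ)).symm) ∘ (MeasurableEquiv.finTwoArrow (α := ℝ)).symm := by
      funext p
      have h4 : (MeasurableEquiv.finTwoArrow (α := ℝ)).symm p = ![p.1, p.2] := by
        funext i; fin_cases i <;> rfl
      simp only [hFdef, Function.comp, h4]
    rw [heq]
    exact (h1.comp h2).comp h3
  set T : Set (ℝ × ℝ) := F ⁻¹' S with hTdef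
  have hTm : MeasurableSet T := hF.measurable hS
  have hvolT : volume T = volume S := hF.measure_preimage hS.nullMeasurableSet
  have hTfin : volume T ≠ ⊤ := by
    rw [hvolT, hSdef]
    exact ((measure_mono (fun y hy => hy.1.2)).trans_lt measure_ball_lt_top).ne
  -- measurable hull of A
  set A' : Set ℝ := toMeasurable volume A with hA'def
  have hA'm : MeasurableSet A' := measurableSet_toMeasurable _ _
  have hAA' : A ⊆ A' := subset_toMeasurable _ _
  have hA'vol : volume A' = volume A := measure_toMeasurable A
  -- the folding map and the angular set B
  set g : ℝ → ℝ := fun θ => if 0 ≤ θ then θ else θ + π with hgdef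
  have hgm : Measurable g := by
    rw [hgdef]
    exact Measurable.ite measurableSet_Ici measurable_id (measurable_id.add_const π)
  set B : Set ℝ := (g ⁻¹' A') ∩ Ioo (-π) π with hBdef
  have hBm : MeasurableSet B := (hgm hA'm).inter measurableSet_Ioo
  have hBsub : B ⊆ Ioo (-π) π := inter_subset_right
  have hBfin : volume B ≠ ⊤ := ((measure_mono hBsub).trans_lt measure_Ioo_lt_top).ne
  have hBvol : volume B ≤ 2 * volume A := by
    have hsub : B ⊆ A' ∪ (fun θ => θ + π) ⁻¹' A' := by
      rintro θ ⟨hθ1, _⟩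
      by_cases h : 0 ≤ θ
      · left; simpa [hgdef, h] using hθ1
      · right; simpa [hgdef, h] using hθ1
    calc volume B ≤ volume (A' ∪ (fun θ => θ + π) ⁻¹' A') := measure_mono hsub
      _ ≤ volume A' + volume ((fun θ => θ + π) ⁻¹' A') := measure_union_le _ _
      _ = volume A + volume A := by rw [measure_preimage_add_right, hA'vol]
      _ = 2 * volume A := (two_mul _).symm
  -- direction vectors
  set u : ℝ → EuclideanSpace ℝ (Fin 2) :=
    fun θ => (WithLp.equiv 2 (Fin 2 → ℝ)).symm ![Real.cos θ, Real.sin θ] with hudef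
  have hunorm : ∀ θ, ‖u θ‖ = 1 := by
    intro θ
    rw [hudef]
    simp only []
    rw [euclid_norm_vec, Real.cos_sq_add_sin_sq, Real.sqrt_one]
  -- key pointwise fact
  have hkey : ∀ r θ : ℝ, 0 < r → θ ∈ Ioo (-π) π → polarCoord.symm (r, θ) ∈ T →
      r ∈ Ioo (0:ℝ) ε ∧ θ ∈ B := by
    intro r θ hr hθ hmem
    have hps : polarCoord.symm (r, θ) = (r * Real.cos θ, r * Real.sin θ) := rfl
    rw [hps, hTdef, Set.mem_preimage] at hmem
    have hFp : F (r * Real.cos θ, r * Real.sin θ) = x + r • u θ := by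
      simp only [hFdef, hudef]
      rw [euclid_smul_vec]
    rw [hFp, hSdef] at hmem
    obtain ⟨⟨hmemE, hmemB⟩, hne⟩ := hmem
    have hdist : dist (x + r • u θ) x = r := by
      rw [dist_eq_norm, add_sub_cancel_left, norm_smul, hunorm, Real.norm_eq_abs,
        abs_of_pos hr, mul_one]
    have hrε : r < ε := by rwa [Metric.mem_ball, hdist] at hmemB
    refine ⟨⟨hr, hrε⟩, ?_, hθ⟩
    show g θ ∈ A'
    apply hAA'
    rw [hgdef]
    by_cases h : 0 ≤ θ
    · simp only [h, if_pos]
      rw [hA]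
      exact ⟨⟨h, hθ.2⟩, r, ⟨lt_trans (neg_lt_zero.2 hε) hr, hrε⟩, hr.ne', hmemE⟩
    · simp only [h, if_neg, if_false]
      push_neg at h
      rw [hA]
      refine ⟨⟨by linarith [hθ.1], by linarith⟩, -r,
        ⟨by linarith, by linarith⟩, neg_ne_zero.2 hr.ne', ?_⟩
      have hcs : (-r) • u (θ + π) = r • u θ := by
        rw [hudef]
        simp only []
        rw [Real.cos_add_pi, Real.sin_add_pi]
        have h5 : (![-Real.cos θ, -Real.sin θ] : Fin 2 → ℝ)
            = ![(-1:ℝ) * Real.cos θ, (-1:ℝ) * Real.sin θ] := by norm_num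
        rw [h5, euclid_smul_vec, smul_smul]
        norm_num
      show x + (-r) • u (θ + π) ∈ E
      rw [hcs]
      exact hmemE
  -- integrand bounds
  set h1f : ℝ → ℝ := (Ioo (0:ℝ) ε).indicator id with hh1f
  set g1f : ℝ → ℝ := B.indicator 1 with hg1f
  have hg1nonneg : ∀ θ, 0 ≤ g1f θ := fun θ =>
    Set.indicator_nonneg (fun _ _ => zero_le_one) θ
  have hh1nonneg : ∀ r, 0 ≤ h1f r := fun r =>
    Set.indicator_nonneg (fun y hy => le_of_lt hy.1) r
  have htargetm : MeasurableSet polarCoord.target :=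
    measurableSet_Ioi.prod measurableSet_Ioo
  have hpoint : ∀ p ∈ polarCoord.target,
      p.1 • (T.indicator (1 : ℝ × ℝ → ℝ)) (polarCoord.symm p) ≤ h1f p.1 * g1f p.2 := by
    rintro ⟨r, θ⟩ hp
    have hr : r ∈ Ioi (0:ℝ) := (Set.mem_prod.1 hp).1
    have hθ : θ ∈ Ioo (-π) π := (Set.mem_prod.1 hp).2
    by_cases hmem : polarCoord.symm (r, θ) ∈ T
    · obtain ⟨hrI, hθB⟩ := hkey r θ hr hθ hmem
      rw [Set.indicator_of_mem hmem, hh1f, hg1f,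
        Set.indicator_of_mem hrI, Set.indicator_of_mem hθB]
      simp [smul_eq_mul]
    · rw [Set.indicator_of_notMem hmem]
      simp only [smul_zero]
      exact mul_nonneg (hh1nonneg r) (hg1nonneg θ)
  have hnonneg : 0 ≤ᵐ[volume.restrict polarCoord.target]
      fun p : ℝ × ℝ => p.1 • (T.indicator (1 : ℝ × ℝ → ℝ)) (polarCoord.symm p) := by
    refine ae_restrict_of_forall_mem htargetm ?_
    rintro ⟨r, θ⟩ hp
    have hr : r ∈ Ioi (0:ℝ) := (Set.mem_prod.1 hp).1
    exact smul_nonneg (le_of_lt hr) (Set.indicator_nonneg (fun _ _ => zero_le_one) _)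
  have hIntRHS : IntegrableOn (fun p : ℝ × ℝ => h1f p.1 * g1f p.2) polarCoord.target volume := by
    have hint1 : Integrable h1f (volume.restrict (Ioi (0:ℝ))) := by
      have hid : IntegrableOn id (Ioo (0:ℝ) ε) volume :=
        (continuous_id.integrableOn_Icc).mono_set Ioo_subset_Icc_self
      rw [hh1f]
      exact ((integrable_indicator_iff measurableSet_Ioo).2 hid).integrableOn
    have hint2 : Integrable g1f (volume.restrict (Ioo (-π) π)) := by
      have hone : IntegrableOn (fun _ : ℝ => (1:ℝ)) B volume :=
        integrableOn_const hBfin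
      rw [hg1f]
      exact ((integrable_indicator_iff hBm).2 hone).integrableOn
    have htgt : polarCoord.target = Ioi (0:ℝ) ×ˢ Ioo (-π) π := rfl
    rw [IntegrableOn, htgt, Measure.volume_eq_prod, ← Measure.prod_restrict]
    exact hint1.mul_prod hint2
  have hI1 : ∫ r in Ioi (0:ℝ), h1f r = ε ^ 2 / 2 := by
    rw [hh1f, setIntegral_indicator measurableSet_Ioo,
      inter_eq_self_of_subset_right Ioo_subset_Ioi_self, ← integral_Ioc_eq_integral_Ioo,
      ← intervalIntegral.integral_of_le hε.le]
    simp only [id_eq]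
    rw [integral_id]
    ring
  have hI2 : ∫ θ in Ioo (-π) π, g1f θ = (volume B).toReal := by
    rw [hg1f, setIntegral_indicator hBm, inter_eq_self_of_subset_right hBsub]
    simp only [Pi.one_apply]
    rw [setIntegral_const]
    simp
    rfl
  have hmain : (volume T).toReal ≤ ε ^ 2 / 2 * (volume B).toReal := by
    calc (volume T).toReal
        = ∫ p, T.indicator (1 : ℝ × ℝ → ℝ) p := (integral_indicator_one hTm).symm
      _ = ∫ p in polarCoord.target,
            p.1 • T.indicator (1 : ℝ × ℝ → ℝ) (polarCoord.symm p) :=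
          (integral_comp_polarCoord_symm _).symm
      _ ≤ ∫ p in polarCoord.target, h1f p.1 * g1f p.2 :=
          integral_mono_of_nonneg hnonneg hIntRHS (ae_restrict_of_forall_mem htargetm hpoint)
      _ = (∫ r in Ioi (0:ℝ), h1f r) * ∫ θ in Ioo (-π) π, g1f θ := by
          rw [show polarCoord.target = Ioi (0:ℝ) ×ˢ Ioo (-π) π from rfl, Measure.volume_eq_prod]
          exact setIntegral_prod_mul h1f g1f _ _
      _ = ε ^ 2 / 2 * (volume B).toReal := by rw [hI1, hI2]
  calc volume S = volume T := hvolT.symm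
    _ = ENNReal.ofReal ((volume T).toReal) := (ENNReal.ofReal_toReal hTfin).symm
    _ ≤ ENNReal.ofReal (ε ^ 2 / 2 * (volume B).toReal) := ENNReal.ofReal_le_ofReal hmain
    _ = ENNReal.ofReal (ε ^ 2 / 2) * volume B := by
        rw [ENNReal.ofReal_mul (by positivity), ENNReal.ofReal_toReal hBfin]
    _ ≤ ENNReal.ofReal (ε ^ 2 / 2) * (2 * volume A) := mul_le_mul_right hBvol _
    _ = ENNReal.ofReal (ε ^ 2) * volume A := by
        rw [← mul_assoc]
        congr 1
        have h2 : (2 : ENNReal) = ENNReal.ofReal (2:ℝ) := by norm_num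
        rw [h2, ← ENNReal.ofReal_mul (by positivity)]
        norm_num
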